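/- If G is a graph with girth at least 5, ψ is a minimal b-coloring of G with k colors, and u is a b-vertex such that at most one color class (other than ψ(u)) has no b-vertex adjacent to u, then u is a (k−1)-iris, i.e., u has at least k−2 neighbors of degree at least k−2. -/

import Mathlib

def IsBVertex {V : Type*} (G : SimpleGraph V) {k : ℕ} (ψ : V → Fin k) (u : V) : Prop :=
  ∀ c : Fin k, c ≠ ψ u → ∃ v, G.Adj u v ∧ ψ v = c

def IsBColoring {V : Type*} (G : SimpleGraph V) (k : ℕ) (ψ : V → Fin k) : Prop :=
  (∀ u v, G.Adj u v → ψ u ≠ ψ v) ∧ ∀ c : Fin k, ∃ u, ψ u = c ∧ IsBVertex G ψ u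

def MinimalBColoring {V : Type*} (G : SimpleGraph V) (k : ℕ) (ψ : V → Fin k) : Prop :=
  IsBColoring G k ψ ∧ ∀ φ : V → Fin k, IsBColoring G k φ →
    {u | IsBVertex G ψ u}.ncard ≤ {u | IsBVertex G φ u}.ncard

def IsKIris {V : Type*} (G : SimpleGraph V) (k : ℕ) (u : V) : Prop :=
  ∃ S : Finset V, (↑S : Set V) ⊆ G.neighborSet u ∧
    (∀ v ∈ S, k - 1 ≤ (G.neighborSet v).ncard) ∧ S.card = k - 1

/-- Any b-vertex has degree at least `k - 1`. -/
lemma bvertex_deg {V : Type*} [Fintype V] (G : SimpleGraph V) {k : ℕ} (ψ : V → Fin k)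
    (w : V) (hw : IsBVertex G ψ w) : k - 1 ≤ (G.neighborSet w).ncard := by
  classical
  have hfin : (G.neighborSet w).Finite := Set.toFinite _
  set A : Finset (Fin k) := Finset.univ.erase (ψ w) with hA
  have hcard : A.card = k - 1 := by
    rw [hA, Finset.card_erase_of_mem (Finset.mem_univ _), Finset.card_univ, Fintype.card_fin]
  let g : Fin k → V := fun c => if h : c ≠ ψ w then (hw c h).choose else w
  have hg : ∀ c, c ≠ ψ w → G.Adj w (g c) ∧ ψ (g c) = c := by
    intro c hc
    simp only [g, dif_pos hc]
    exact (hw c hc).choose_spec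
  have himg : (A.image g).card = A.card := by
    apply Finset.card_image_of_injOn
    intro a ha b hb hab
    have ha' : a ≠ ψ w := (Finset.mem_erase.mp ha).1
    have hb' : b ≠ ψ w := (Finset.mem_erase.mp hb).1
    rw [← (hg a ha').2, ← (hg b hb').2, hab]
  have hsub : A.image g ⊆ hfin.toFinset := by
    intro v hv
    simp only [Finset.mem_image] at hv
    obtain ⟨c, hc, rfl⟩ := hv
    have hc' : c ≠ ψ w := (Finset.mem_erase.mp hc).1
    simpa using (hg c hc').1
  calc k - 1 = (A.image g).card := by rw [himg, hcard]
    _ ≤ hfin.toFinset.card := Finset.card_le_card hsub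
    _ = (G.neighborSet w).ncard := (Set.ncard_eq_toFinset_card _ hfin).symm

theorem stmt17 {V : Type*} [Fintype V] (G : SimpleGraph V) (h5 : 5 ≤ G.egirth)
    (k : ℕ) (ψ : V → Fin k) (hmin : MinimalBColoring G k ψ)
    (u : V) (hu : IsBVertex G ψ u)
    (h1 : {i : Fin k | i ≠ ψ u ∧ ¬ ∃ w, G.Adj u w ∧ ψ w = i ∧ IsBVertex G ψ w}.ncard ≤ 1) :
    IsKIris G (k - 1) u := by
  classical
  set P : Fin k → Prop := fun c => ∃ w, G.Adj u w ∧ ψ w = c ∧ IsBVertex G ψ w with hP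
  set good : Finset (Fin k) := (Finset.univ.erase (ψ u)).filter P with hgooddef
  set badF : Finset (Fin k) := (Finset.univ.erase (ψ u)).filter (fun c => ¬ P c) with hbaddef
  have hbadset : {i : Fin k | i ≠ ψ u ∧ ¬ ∃ w, G.Adj u w ∧ ψ w = i ∧ IsBVertex G ψ w}
      = ↑badF := by
    ext i
    simp [hbaddef, hP, and_comm]
  have hbadcard : badF.card ≤ 1 := by
    rwa [hbadset, Set.ncard_coe_finset] at h1
  have hsplit : good.card + badF.card = k - 1 := by
    rw [hgooddef, hbaddef, Finset.card_filter_add_card_filter_not,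
      Finset.card_erase_of_mem (Finset.mem_univ _), Finset.card_univ, Fintype.card_fin]
  have hgoodcard : k - 2 ≤ good.card := by omega
  obtain ⟨T, hTsub, hTcard⟩ := Finset.exists_subset_card_eq hgoodcard
  let g : Fin k → V := fun c => if h : P c then h.choose else u
  have hg : ∀ c, P c → G.Adj u (g c) ∧ ψ (g c) = c ∧ IsBVertex G ψ (g c) := by
    intro c hc
    simp only [g, dif_pos hc]
    exact hc.choose_spec
  have hPT : ∀ c ∈ T, P c := fun c hc => (Finset.mem_filter.mp (hTsub hc)).2
  refine ⟨T.image g, ?_, ?_, ?_⟩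
  · intro v hv
    simp only [Finset.coe_image, Set.mem_image, Finset.mem_coe] at hv
    obtain ⟨c, hc, rfl⟩ := hv
    exact (hg c (hPT c hc)).1
  · intro v hv
    simp only [Finset.mem_image] at hv
    obtain ⟨c, hc, rfl⟩ := hv
    have := bvertex_deg G ψ (g c) (hg c (hPT c hc)).2.2
    omega
  · have hinj : Set.InjOn g T := by
      intro a ha b hb hab
      rw [← (hg a (hPT a ha)).2.1, ← (hg b (hPT b hb)).2.1, hab]
    rw [Finset.card_image_of_injOn hinj, hTcard]
    omega
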